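/- Let p be a prime and α > 0. Let u : ℚ_p → ℝ be a bounded square-integrable function with Q_α(u) < ∞, and for n ∈ ℕ let B_n := {x ∈ ℚ_p : ‖x‖_p ≤ p^n}. Then limsup_{n→∞} Q_α(u · 1_{B_n}) ≤ Q_α(u); that is, truncation by indicators of large balls asymptotically does not increase the Dirichlet energy of 𝔇^α. -/

import Mathlib

open MeasureTheory Filter

/-- The `p`-adic Gamma function `Γ_p(z) = (1 - p^(z-1)) / (1 - p^(-z))`. -/
noncomputable def gammaP (p : ℕ) (z : ℝ) : ℝ :=
  (1 - (p : ℝ) ^ (z - 1)) / (1 - (p : ℝ) ^ (-z))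

/-- The Dirichlet energy `Q_α` of `𝔇^α`, with values in `[0,∞]`:
`Q_α(φ) = -(1/(2Γ_p(-α))) ∬ (φ(x)-φ(y))² ‖x-y‖_p^{-(1+α)} dm(x) dm(y)`
(note `-(1/(2Γ_p(-α))) > 0` for `α > 0`). -/
noncomputable def QformE (p : ℕ) [Fact p.Prime] [MeasurableSpace ℚ_[p]]
    (m : Measure ℚ_[p]) (α : ℝ) (φ : ℚ_[p] → ℝ) : ENNReal :=
  ENNReal.ofReal (-(1 / (2 * gammaP p (-α)))) *
    ∫⁻ q : ℚ_[p] × ℚ_[p],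
      ENNReal.ofReal ((φ q.1 - φ q.2) ^ 2 * ‖q.1 - q.2‖ ^ (-(1 + α))) ∂(m.prod m)

/-- Truncating a bounded square-integrable function of finite Dirichlet energy by
the indicators of the balls `B_n = {‖x‖_p ≤ p^n}` asymptotically does not increase
the energy: `limsup_n Q_α(u·1_{B_n}) ≤ Q_α(u)`. -/
theorem limsup_energy_truncation_le (p : ℕ) [Fact p.Prime]
    [MeasurableSpace ℚ_[p]] [BorelSpace ℚ_[p]] (m : Measure ℚ_[p])
    (hm : ∀ (x : ℚ_[p]) (k : ℤ),
      m (Metric.closedBall x ((p : ℝ) ^ k)) = ENNReal.ofReal ((p : ℝ) ^ k))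
    (α : ℝ) (hα : 0 < α) (u : ℚ_[p] → ℝ)
    (humeas : Measurable u) (hubd : ∃ C : ℝ, ∀ x, |u x| ≤ C)
    (huL2 : Integrable (fun x => u x ^ 2) m)
    (huQ : QformE p m α u < ⊤) :
    Filter.limsup
      (fun n : ℕ => QformE p m α
        ((Metric.closedBall (0 : ℚ_[p]) ((p : ℝ) ^ (n : ℤ))).indicator u))
      Filter.atTop
      ≤ QformE p m α u := by
  classical
  have hp1 : (1 : ℝ) < (p : ℝ) := by exact_mod_cast (Fact.out : p.Prime).one_lt
  have hp0 : (0 : ℝ) < (p : ℝ) := lt_trans one_pos hp1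
  -- measure of natural-radius balls
  have hmn : ∀ (x : ℚ_[p]) (j : ℕ),
      m (Metric.closedBall x ((p : ℝ) ^ j)) = ENNReal.ofReal ((p : ℝ) ^ j) := by
    intro x j
    have := hm x (j : ℤ)
    rwa [zpow_natCast] at this
  haveI : SigmaFinite m := by
    refine ⟨⟨⟨fun n => Metric.closedBall 0 ((p : ℝ) ^ (n : ℕ)), fun _ => trivial,
      fun n => ?_, ?_⟩⟩⟩
    · rw [hmn]; exact ENNReal.ofReal_lt_top
    · refine Set.eq_univ_of_forall fun x => Set.mem_iUnion.2 ?_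
      obtain ⟨n, hn⟩ := pow_unbounded_of_one_lt ‖x‖ hp1
      exact ⟨n, by simpa [Metric.mem_closedBall, dist_zero_right] using hn.le⟩
  -- notation
  set B : ℕ → Set ℚ_[p] := fun n => Metric.closedBall 0 ((p : ℝ) ^ (n : ℤ)) with hBdef
  have hBmeas : ∀ n, MeasurableSet (B n) := fun n => measurableSet_closedBall
  have hmemB : ∀ (n : ℕ) (x : ℚ_[p]), x ∈ B n ↔ ‖x‖ ≤ (p : ℝ) ^ (n : ℕ) := by
    intro n x
    simp [hBdef, Metric.mem_closedBall, dist_zero_right, zpow_natCast]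
  -- the weight
  set W : ℚ_[p] × ℚ_[p] → ENNReal :=
    fun q => ENNReal.ofReal (‖q.1 - q.2‖ ^ (-(1 + α))) with hWdef
  have hw_inv : ∀ t : ℝ, 0 ≤ t → t ^ (-(1 + α)) = (t ^ (1 + α))⁻¹ :=
    fun t ht => Real.rpow_neg ht _
  have hrc : Continuous fun x : ℝ => x ^ (1 + α) :=
    Real.continuous_rpow_const (by linarith)
  have hWmeas : Measurable W := by
    apply ENNReal.measurable_ofReal.comp
    have : (fun q : ℚ_[p] × ℚ_[p] => ‖q.1 - q.2‖ ^ (-(1 + α)))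
        = fun q => (‖q.1 - q.2‖ ^ (1 + α))⁻¹ :=
      funext fun q => hw_inv _ (norm_nonneg _)
    rw [this]
    exact (hrc.measurable.comp (measurable_fst.sub measurable_snd).norm).inv
  set w : ℚ_[p] → ENNReal := fun y => ENNReal.ofReal (‖y‖ ^ (-(1 + α))) with hwdef
  have hwmeas : Measurable w := by
    apply ENNReal.measurable_ofReal.comp
    have : (fun y : ℚ_[p] => ‖y‖ ^ (-(1 + α))) = fun y => (‖y‖ ^ (1 + α))⁻¹ :=
      funext fun y => hw_inv _ (norm_nonneg _)
    rw [this]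
    exact (hrc.measurable.comp measurable_norm).inv
  -- the energy integrand
  set F : (ℚ_[p] → ℝ) → ℚ_[p] × ℚ_[p] → ENNReal :=
    fun φ q => ENNReal.ofReal ((φ q.1 - φ q.2) ^ 2) * W q with hFdef
  have hQeq : ∀ φ : ℚ_[p] → ℝ, QformE p m α φ
      = ENNReal.ofReal (-(1 / (2 * gammaP p (-α)))) * ∫⁻ q, F φ q ∂(m.prod m) := by
    intro φ
    unfold QformE
    congr 1
    refine lintegral_congr fun q => ?_
    rw [hFdef, hWdef, ENNReal.ofReal_mul (sq_nonneg _)]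
  set c : ENNReal := ENNReal.ofReal (-(1 / (2 * gammaP p (-α)))) with hcdef
  have hFumeas : ∀ φ : ℚ_[p] → ℝ, Measurable φ → Measurable (F φ) := by
    intro φ hφ
    rw [hFdef]
    exact (ENNReal.measurable_ofReal.comp
      (((hφ.comp measurable_fst).sub (hφ.comp measurable_snd)).pow_const 2)).mul hWmeas
  -- square integrability
  set S : ENNReal := ∫⁻ x, ENNReal.ofReal (u x ^ 2) ∂m with hSdef
  have hS : S < ⊤ := huL2.lintegral_lt_top
  have hu2meas : Measurable fun x => ENNReal.ofReal (u x ^ 2) :=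
    ENNReal.measurable_ofReal.comp (humeas.pow_const 2)
  -- tail integrals
  set J : ℕ → ENNReal := fun n => ∫⁻ y, ((B n)ᶜ).indicator w y ∂m with hJdef
  -- norm equality on mixed region
  have hnorm : ∀ (n : ℕ) (x y : ℚ_[p]), x ∈ B n → y ∉ B n → ‖x - y‖ = ‖y‖ := by
    intro n x y hx hy
    rw [hmemB] at hx hy
    push_neg at hy
    have hlt : ‖x‖ < ‖y‖ := lt_of_le_of_lt hx hy
    have hne : ‖x‖ ≠ ‖-y‖ := by rw [norm_neg]; exact ne_of_lt hlt
    rw [sub_eq_add_neg, Padic.add_eq_max_of_ne hne, norm_neg]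
    exact max_eq_right hlt.le
  -- geometric data
  set r : ℝ := (p : ℝ) ^ (-α) with hrdef
  have hr0 : 0 < r := Real.rpow_pos_of_pos hp0 _
  have hr1 : r < 1 := Real.rpow_lt_one_of_one_lt_of_neg hp1 (by linarith)
  have hq1 : ENNReal.ofReal r < 1 := by
    rw [← ENNReal.ofReal_one]
    exact (ENNReal.ofReal_lt_ofReal_iff_of_nonneg hr0.le).2 hr1
  -- tail estimate
  have hJle : ∀ n : ℕ, J n ≤ ENNReal.ofReal ((p : ℝ) * r ^ n)
      * (1 - ENNReal.ofReal r)⁻¹ := by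
    intro n
    set A : ℕ → Set ℚ_[p] := fun k =>
      Metric.closedBall 0 ((p : ℝ) ^ (n + 1 + k)) \ Metric.closedBall 0 ((p : ℝ) ^ (n + k))
      with hAdef
    have hcover : (B n)ᶜ ⊆ ⋃ k, A k := by
      intro y hy
      rw [Set.mem_compl_iff, hmemB] at hy
      push_neg at hy
      have hex : ∃ k : ℕ, ‖y‖ ≤ (p : ℝ) ^ (n + 1 + k) := by
        obtain ⟨k, hk⟩ := pow_unbounded_of_one_lt ‖y‖ hp1
        exact ⟨k, le_of_lt (lt_of_lt_of_le hk (pow_le_pow_right₀ hp1.le (by omega)))⟩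
      refine Set.mem_iUnion.2 ⟨Nat.find hex, ?_⟩
      constructor
      · simpa [Metric.mem_closedBall, dist_zero_right] using Nat.find_spec hex
      · simp only [Metric.mem_closedBall, dist_zero_right, not_le]
        by_contra hcon
        push_neg at hcon
        rcases Nat.eq_zero_or_pos (Nat.find hex) with h0 | hpos
        · rw [h0, add_zero] at hcon
          exact absurd hcon (not_le.2 hy)
        · refine Nat.find_min hex (show Nat.find hex - 1 < Nat.find hex by omega) ?_
          rwa [show n + 1 + (Nat.find hex - 1) = n + Nat.find hex by omega]
    calc J n = ∫⁻ y in (B n)ᶜ, w y ∂m := lintegral_indicator (hBmeas n).compl w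
      _ ≤ ∫⁻ y in ⋃ k, A k, w y ∂m := lintegral_mono_set hcover
      _ ≤ ∑' k, ∫⁻ y in A k, w y ∂m := lintegral_iUnion_le _ _
      _ ≤ ∑' k, ENNReal.ofReal ((p : ℝ) * r ^ n * r ^ k) := by
          refine ENNReal.tsum_le_tsum fun k => ?_
          have hb1 : (0 : ℝ) < (p : ℝ) ^ (n + k) := pow_pos hp0 _
          have hstep : ∫⁻ y in A k, w y ∂m
              ≤ ∫⁻ _ in A k, ENNReal.ofReal (((p : ℝ) ^ (n + k)) ^ (-(1 + α))) ∂m := by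
            refine setLIntegral_mono measurable_const fun y hyA => ?_
            have hygt : (p : ℝ) ^ (n + k) < ‖y‖ := by
              have := hyA.2
              simpa [Metric.mem_closedBall, dist_zero_right, not_le] using this
            apply ENNReal.ofReal_le_ofReal
            rw [hw_inv _ (norm_nonneg _), hw_inv _ hb1.le]
            have h1 : ((p : ℝ) ^ (n + k)) ^ (1 + α) ≤ ‖y‖ ^ (1 + α) :=
              Real.rpow_le_rpow hb1.le hygt.le (by linarith)
            have h2 : (0 : ℝ) < ((p : ℝ) ^ (n + k)) ^ (1 + α) :=
              Real.rpow_pos_of_pos hb1 _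
            exact inv_anti₀ h2 h1
          have hAm : m (A k) ≤ ENNReal.ofReal ((p : ℝ) ^ (n + 1 + k)) := by
            calc m (A k) ≤ m (Metric.closedBall 0 ((p : ℝ) ^ (n + 1 + k))) :=
                  measure_mono Set.diff_subset
              _ = _ := hmn 0 _
          have harith : ((p : ℝ) ^ (n + k)) ^ (-(1 + α)) * (p : ℝ) ^ (n + 1 + k)
              = (p : ℝ) * r ^ n * r ^ k := by
            have e1 : ((p : ℝ) ^ (n + k) : ℝ) ^ (-(1 + α))
                = (p : ℝ) ^ ((((n + k) : ℕ) : ℝ) * (-(1 + α))) := by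
              rw [Real.rpow_mul hp0.le, Real.rpow_natCast]
            have e2 : ((p : ℝ) ^ (n + 1 + k) : ℝ)
                = (p : ℝ) ^ ((((n + 1 + k) : ℕ) : ℝ)) := (Real.rpow_natCast _ _).symm
            have e3 : r ^ n = (p : ℝ) ^ ((-α) * (n : ℝ)) := by
              rw [hrdef, ← Real.rpow_natCast ((p : ℝ) ^ (-α)) n, ← Real.rpow_mul hp0.le]
            have e4 : r ^ k = (p : ℝ) ^ ((-α) * (k : ℝ)) := by
              rw [hrdef, ← Real.rpow_natCast ((p : ℝ) ^ (-α)) k, ← Real.rpow_mul hp0.le]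
            rw [e1, e2, e3, e4, ← Real.rpow_add hp0, mul_assoc, ← Real.rpow_add hp0]
            rw [show ((((n + k) : ℕ) : ℝ) * (-(1 + α)) + (((n + 1 + k) : ℕ) : ℝ))
                = (1 : ℝ) + ((-α) * (n : ℝ) + (-α) * (k : ℝ)) from by push_cast; ring]
            rw [Real.rpow_add hp0, Real.rpow_one]
          calc ∫⁻ y in A k, w y ∂m
              ≤ ENNReal.ofReal (((p : ℝ) ^ (n + k)) ^ (-(1 + α))) * m (A k) :=
                le_trans hstep (le_of_eq (setLIntegral_const _ _))
            _ ≤ ENNReal.ofReal (((p : ℝ) ^ (n + k)) ^ (-(1 + α)))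
                * ENNReal.ofReal ((p : ℝ) ^ (n + 1 + k)) := mul_le_mul_right hAm _
            _ = ENNReal.ofReal (((p : ℝ) ^ (n + k)) ^ (-(1 + α)) * (p : ℝ) ^ (n + 1 + k)) :=
                (ENNReal.ofReal_mul (by positivity)).symm
            _ = ENNReal.ofReal ((p : ℝ) * r ^ n * r ^ k) := by rw [harith]
      _ = ENNReal.ofReal ((p : ℝ) * r ^ n) * ∑' k, (ENNReal.ofReal r) ^ k := by
          rw [← ENNReal.tsum_mul_left]
          refine tsum_congr fun k => ?_
          rw [← ENNReal.ofReal_pow hr0.le, ← ENNReal.ofReal_mul (by positivity)]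
      _ = ENNReal.ofReal ((p : ℝ) * r ^ n) * (1 - ENNReal.ofReal r)⁻¹ := by
          rw [ENNReal.tsum_geometric]
  -- mixed-region indicators
  set indA : ℕ → ℚ_[p] → ENNReal :=
    fun n => (B n).indicator (fun x => ENNReal.ofReal (u x ^ 2)) with hindAdef
  set ind1 : ℕ → ℚ_[p] → ENNReal :=
    fun n => ((B n)ᶜ).indicator (fun _ => (1 : ENNReal)) with hind1def
  have hindAmeas : ∀ n, Measurable (indA n) := fun n => hu2meas.indicator (hBmeas n)
  have hind1meas : ∀ n, Measurable (ind1 n) :=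
    fun n => measurable_const.indicator (hBmeas n).compl
  -- pointwise bound
  have hpt : ∀ (n : ℕ) (q : ℚ_[p] × ℚ_[p]),
      F ((B n).indicator u) q
        ≤ F u q + (indA n q.1 * ind1 n q.2 * W q + ind1 n q.1 * indA n q.2 * W q) := by
    intro n q
    obtain ⟨x, y⟩ := q
    by_cases hx : x ∈ B n <;> by_cases hy : y ∈ B n
    · have e1 : (B n).indicator u x = u x := Set.indicator_of_mem hx u
      have e2 : (B n).indicator u y = u y := Set.indicator_of_mem hy u
      simp only [hFdef, e1, e2]
      exact le_self_add
    · have e1 : (B n).indicator u x = u x := Set.indicator_of_mem hx u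
      have e2 : (B n).indicator u y = 0 := Set.indicator_of_notMem hy u
      have e3 : indA n x = ENNReal.ofReal (u x ^ 2) := Set.indicator_of_mem hx _
      have e4 : ind1 n y = 1 := Set.indicator_of_mem (Set.mem_compl hy) _
      simp only [hFdef, e1, e2]
      have he : ENNReal.ofReal ((u x - 0) ^ 2) * W (x, y)
          = indA n x * ind1 n y * W (x, y) := by
        rw [e3, e4, sub_zero, mul_one]
      rw [he]
      exact le_trans le_self_add le_add_self
    · have e1 : (B n).indicator u x = 0 := Set.indicator_of_notMem hx u
      have e2 : (B n).indicator u y = u y := Set.indicator_of_mem hy u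
      have e3 : indA n y = ENNReal.ofReal (u y ^ 2) := Set.indicator_of_mem hy _
      have e4 : ind1 n x = 1 := Set.indicator_of_mem (Set.mem_compl hx) _
      simp only [hFdef, e1, e2]
      have he : ENNReal.ofReal ((0 - u y) ^ 2) * W (x, y)
          = ind1 n x * indA n y * W (x, y) := by
        rw [e3, e4, zero_sub, neg_sq, one_mul]
      rw [he]
      exact le_trans le_add_self le_add_self
    · have e1 : (B n).indicator u x = 0 := Set.indicator_of_notMem hx u
      have e2 : (B n).indicator u y = 0 := Set.indicator_of_notMem hy u
      simp only [hFdef, e1, e2, sub_zero, ne_eq, OfNat.ofNat_ne_zero,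
        not_false_eq_true, zero_pow, ENNReal.ofReal_zero, zero_mul]
      exact zero_le
  -- mixed-term integral bounds
  have hmix1 : ∀ n : ℕ,
      ∫⁻ q, indA n q.1 * ind1 n q.2 * W q ∂(m.prod m) ≤ S * J n := by
    intro n
    have hmeasint : Measurable fun q : ℚ_[p] × ℚ_[p] => indA n q.1 * ind1 n q.2 * W q :=
      (((hindAmeas n).comp measurable_fst).mul ((hind1meas n).comp measurable_snd)).mul hWmeas
    rw [MeasureTheory.lintegral_prod _ hmeasint.aemeasurable]
    have hinner : ∀ x : ℚ_[p],
        ∫⁻ y, indA n x * ind1 n y * W (x, y) ∂m ≤ indA n x * J n := by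
      intro x
      have hre : ∀ y, indA n x * ind1 n y * W (x, y) = indA n x * (ind1 n y * W (x, y)) :=
        fun y => mul_assoc _ _ _
      simp only [hre]
      have hmW : Measurable fun y => ind1 n y * W (x, y) :=
        (hind1meas n).mul (hWmeas.comp measurable_prodMk_left)
      rw [lintegral_const_mul _ hmW]
      by_cases hx : x ∈ B n
      · refine mul_le_mul_right (le_of_eq ?_) _
        refine lintegral_congr fun y => ?_
        by_cases hy : y ∈ B n
        · have h1 : ind1 n y = 0 :=
            Set.indicator_of_notMem (by simpa using hy) _
          have h2 : ((B n)ᶜ).indicator w y = 0 :=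
            Set.indicator_of_notMem (by simpa using hy) _
          rw [h1, h2, zero_mul]
        · have h1 : ind1 n y = 1 := Set.indicator_of_mem (Set.mem_compl hy) _
          have h2 : ((B n)ᶜ).indicator w y = w y := Set.indicator_of_mem (Set.mem_compl hy) _
          rw [h1, h2, one_mul]
          simp only [hWdef, hwdef]
          rw [hnorm n x y hx hy]
      · have h0 : indA n x = 0 := Set.indicator_of_notMem hx _
        rw [h0, zero_mul, zero_mul]
    calc ∫⁻ x, ∫⁻ y, indA n x * ind1 n y * W (x, y) ∂m ∂m
        ≤ ∫⁻ x, indA n x * J n ∂m := lintegral_mono hinner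
      _ = (∫⁻ x, indA n x ∂m) * J n := lintegral_mul_const _ (hindAmeas n)
      _ ≤ S * J n := by
          refine mul_le_mul_left ?_ _
          rw [hSdef]
          exact lintegral_mono fun x => Set.indicator_le_self _ _ x
  have hmix2 : ∀ n : ℕ,
      ∫⁻ q, ind1 n q.1 * indA n q.2 * W q ∂(m.prod m) ≤ S * J n := by
    intro n
    have hmeasint : Measurable fun q : ℚ_[p] × ℚ_[p] => ind1 n q.1 * indA n q.2 * W q :=
      (((hind1meas n).comp measurable_fst).mul ((hindAmeas n).comp measurable_snd)).mul hWmeas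
    rw [MeasureTheory.lintegral_prod_symm _ hmeasint.aemeasurable]
    have hinner : ∀ y : ℚ_[p],
        ∫⁻ x, ind1 n x * indA n y * W (x, y) ∂m ≤ indA n y * J n := by
      intro y
      have hre : ∀ x, ind1 n x * indA n y * W (x, y) = indA n y * (ind1 n x * W (x, y)) :=
        fun x => by ring
      simp only [hre]
      have hmW : Measurable fun x => ind1 n x * W (x, y) :=
        (hind1meas n).mul (hWmeas.comp measurable_prodMk_right)
      rw [lintegral_const_mul _ hmW]
      by_cases hy : y ∈ B n
      · refine mul_le_mul_right (le_of_eq ?_) _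
        refine lintegral_congr fun x => ?_
        by_cases hx : x ∈ B n
        · have h1 : ind1 n x = 0 :=
            Set.indicator_of_notMem (by simpa using hx) _
          have h2 : ((B n)ᶜ).indicator w x = 0 :=
            Set.indicator_of_notMem (by simpa using hx) _
          rw [h1, h2, zero_mul]
        · have h1 : ind1 n x = 1 := Set.indicator_of_mem (Set.mem_compl hx) _
          have h2 : ((B n)ᶜ).indicator w x = w x := Set.indicator_of_mem (Set.mem_compl hx) _
          rw [h1, h2, one_mul]
          simp only [hWdef, hwdef]
          rw [show x - y = -(y - x) by ring, norm_neg, hnorm n y x hy hx]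
      · have h0 : indA n y = 0 := Set.indicator_of_notMem hy _
        rw [h0, zero_mul, zero_mul]
    calc ∫⁻ y, ∫⁻ x, ind1 n x * indA n y * W (x, y) ∂m ∂m
        ≤ ∫⁻ y, indA n y * J n ∂m := lintegral_mono hinner
      _ = (∫⁻ y, indA n y ∂m) * J n := lintegral_mul_const _ (hindAmeas n)
      _ ≤ S * J n := by
          refine mul_le_mul_left ?_ _
          rw [hSdef]
          exact lintegral_mono fun x => Set.indicator_le_self _ _ x
  -- main integral estimate
  have hmain : ∀ n : ℕ, (∫⁻ q, F ((B n).indicator u) q ∂(m.prod m))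
      ≤ (∫⁻ q, F u q ∂(m.prod m)) + (S * J n + S * J n) := by
    intro n
    have hG1meas : Measurable fun q : ℚ_[p] × ℚ_[p] => indA n q.1 * ind1 n q.2 * W q :=
      (((hindAmeas n).comp measurable_fst).mul ((hind1meas n).comp measurable_snd)).mul hWmeas
    calc ∫⁻ q, F ((B n).indicator u) q ∂(m.prod m)
        ≤ ∫⁻ q, (F u q + (indA n q.1 * ind1 n q.2 * W q + ind1 n q.1 * indA n q.2 * W q))
            ∂(m.prod m) := lintegral_mono (hpt n)
      _ = (∫⁻ q, F u q ∂(m.prod m))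
          + ((∫⁻ q, indA n q.1 * ind1 n q.2 * W q ∂(m.prod m))
            + ∫⁻ q, ind1 n q.1 * indA n q.2 * W q ∂(m.prod m)) := by
          rw [lintegral_add_left (hFumeas u humeas), lintegral_add_left hG1meas]
      _ ≤ _ := add_le_add le_rfl (add_le_add (hmix1 n) (hmix2 n))
  -- the error terms and their limit
  set q : ENNReal := ENNReal.ofReal r with hqdef
  set K : ENNReal := ENNReal.ofReal (p : ℝ) * (1 - q)⁻¹ with hKdef
  set D : ENNReal := c * (S * K + S * K) with hDdef
  set E : ℕ → ENNReal := fun n => c * (S * J n + S * J n) with hEdef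
  have hJle' : ∀ n, J n ≤ K * q ^ n := by
    intro n
    refine le_trans (hJle n) (le_of_eq ?_)
    rw [ENNReal.ofReal_mul hp0.le, ENNReal.ofReal_pow hr0.le, hKdef, hqdef]
    ring
  have hEle : ∀ n, E n ≤ D * q ^ n := by
    intro n
    calc E n = c * (S * J n + S * J n) := rfl
      _ ≤ c * (S * (K * q ^ n) + S * (K * q ^ n)) := by
          exact mul_le_mul_right (add_le_add (mul_le_mul_right (hJle' n) _)
            (mul_le_mul_right (hJle' n) _)) _
      _ = D * q ^ n := by rw [hDdef]; ring
  have hDne : D ≠ ⊤ := by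
    rw [hDdef, hKdef]
    have hKne : ENNReal.ofReal (p : ℝ) * (1 - q)⁻¹ ≠ ⊤ := by
      apply ENNReal.mul_ne_top ENNReal.ofReal_ne_top
      rw [ENNReal.inv_ne_top]
      intro hzero
      have : (1 : ENNReal) ≤ q := by
        by_contra hlt
        push_neg at hlt
        exact absurd hzero (ne_of_gt (tsub_pos_of_lt hlt))
      exact absurd (lt_of_lt_of_le hq1 this) (lt_irrefl _)
    exact ENNReal.mul_ne_top ENNReal.ofReal_ne_top
      (ENNReal.add_ne_top.2 ⟨ENNReal.mul_ne_top hS.ne hKne, ENNReal.mul_ne_top hS.ne hKne⟩)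
  have hgeo : Tendsto (fun n : ℕ => D * q ^ n) atTop (nhds 0) := by
    have := ENNReal.Tendsto.const_mul
      (ENNReal.tendsto_pow_atTop_nhds_zero_of_lt_one hq1) (Or.inr hDne)
    simpa using this
  have hEten : Tendsto E atTop (nhds 0) :=
    tendsto_of_tendsto_of_tendsto_of_le_of_le tendsto_const_nhds hgeo
      (fun n => zero_le) hEle
  -- assemble
  have hQle : ∀ n : ℕ, QformE p m α ((B n).indicator u) ≤ QformE p m α u + E n := by
    intro n
    rw [hQeq, hQeq]
    calc c * ∫⁻ q', F ((B n).indicator u) q' ∂(m.prod m)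
        ≤ c * ((∫⁻ q', F u q' ∂(m.prod m)) + (S * J n + S * J n)) :=
          mul_le_mul_right (hmain n) c
      _ = c * (∫⁻ q', F u q' ∂(m.prod m)) + E n := by rw [hEdef, mul_add]
  calc limsup (fun n : ℕ => QformE p m α ((B n).indicator u)) atTop
      ≤ limsup (fun n : ℕ => QformE p m α u + E n) atTop :=
        limsup_le_limsup (Eventually.of_forall hQle)
    _ = QformE p m α u := by
        have ht : Tendsto (fun n : ℕ => QformE p m α u + E n) atTop
            (nhds (QformE p m α u + 0)) := tendsto_const_nhds.add hEten
        rw [add_zero] at ht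
        exact ht.limsup_eq
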